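/- Suppose the transition probabilities of a channel satisfy the pointwise detailed balance relation e^{-β_f E_m} p(m→n) = e^{-β_f E_n} p(n→m) for all m, n. Then for every energy value E, the absorption probability P(+E) = Σ_{m,n : E_n − E_m = E} p_m(β_i) p(m→n) and the release probability P(−E) = Σ_{m,n : E_n − E_m = E} p_n(β_i) p(n→m) satisfy P(+E) = e^{(β_i − β_f)E} P(−E), where p_m(β_i) = e^{-β_i E_m}/Σ_k e^{-β_i E_k}. -/

import Mathlib

open Matrix BigOperators
open scoped ComplexOrder

noncomputable section

/-- `d×d` complex matrices. -/
abbrev Mat (d : ℕ) := Matrix (Fin d) (Fin d) ℂ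

/-- The rank-one matrix `|u⟩⟨w|`. -/
def ketbra {d : ℕ} (u w : Fin d → ℂ) : Mat d := Matrix.vecMulVec u (star w)

/-- The matrix element `⟨u|A|w⟩`. -/
def matElem {d : ℕ} (u : Fin d → ℂ) (A : Mat d) (w : Fin d → ℂ) : ℂ :=
  star u ⬝ᵥ (A *ᵥ w)

/-- `v` is an orthonormal family. -/
def ONB {d : ℕ} (v : Fin d → Fin d → ℂ) : Prop :=
  ∀ i j, star (v i) ⬝ᵥ v j = if i = j then 1 else 0

/-- The Gibbs population `p_m(β) = e^{-βE_m} / Σ_k e^{-βE_k}`. -/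
def gibbsP {d : ℕ} (E : Fin d → ℝ) (β : ℝ) (m : Fin d) : ℝ :=
  Real.exp (-(β * E m)) / ∑ k, Real.exp (-(β * E k))

/-- The Gibbs state `ρ_β = e^{-βH}/Tr[e^{-βH}]`, written via the spectral
decomposition of `H` in its orthonormal eigenbasis `v`. -/
def gibbs {d : ℕ} (v : Fin d → Fin d → ℂ) (E : Fin d → ℝ) (β : ℝ) : Mat d :=
  ∑ m, (gibbsP E β m : ℂ) • ketbra (v m) (v m)

/-- pointwise detailed balance at inverse temperature `β_f` implies the
quantum fluctuation relation `P(+E) = e^{(β_i-β_f)E} P(-E)` for every energy value `𝓔`. -/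
theorem stmt2 {d : ℕ} (E : Fin d → ℝ) (βi βf : ℝ) (p : Fin d → Fin d → ℝ)
    (hp : ∀ m n, 0 ≤ p m n)
    (hDB : ∀ m n, Real.exp (-(βf * E m)) * p m n = Real.exp (-(βf * E n)) * p n m)
    (𝓔 : ℝ) :
    (∑ m, ∑ n, if E n - E m = 𝓔 then gibbsP E βi m * p m n else 0)
      = Real.exp ((βi - βf) * 𝓔) *
        ∑ m, ∑ n, if E n - E m = 𝓔 then gibbsP E βi n * p n m else 0 := by
  rw [Finset.mul_sum]
  apply Finset.sum_congr rfl; intro m _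
  rw [Finset.mul_sum]
  apply Finset.sum_congr rfl; intro n _
  split_ifs with h
  · unfold gibbsP
    have hE : E n = E m + 𝓔 := by linarith
    have hdb := hDB m n
    rw [hE]
    rw [hE] at hdb
    have e1 : Real.exp (-(βi*(E m + 𝓔))) = Real.exp (-(βi*E m)) * Real.exp (-(βi*𝓔)) := by
      rw [← Real.exp_add]; ring_nf
    have e2 : Real.exp (-(βf*(E m + 𝓔))) = Real.exp (-(βf*E m)) * Real.exp (-(βf*𝓔)) := by
      rw [← Real.exp_add]; ring_nf
    rw [e2, mul_assoc] at hdb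
    have h2 : p m n = Real.exp (-(βf*𝓔)) * p n m :=
      mul_left_cancel₀ (Real.exp_ne_zero _) hdb
    have e4 : Real.exp ((βi-βf)*𝓔) * Real.exp (-(βi*𝓔)) = Real.exp (-(βf*𝓔)) := by
      rw [← Real.exp_add]; ring_nf
    rw [e1, h2]
    linear_combination (-(Real.exp (-(βi*E m)) * p n m * (∑ k, Real.exp (-(βi*E k)))⁻¹)) * e4
  · ring
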